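/- If S is a set of vertices of the infinite cubic tree T_∞ and f(u*,S) > 0 for some vertex u* of T_∞, then S is not an exponentially independent set in T_∞. -/

import Mathlib

open SimpleGraph
open scoped Classical ENNReal

/-- The graph obtained from `G` by deleting the vertices of `A`
(they are kept as isolated vertices, which does not affect adjacency or distances
among the remaining vertices). -/
def SimpleGraph.deleteSet {V : Type*} (G : SimpleGraph V) (A : Set V) : SimpleGraph V where
  Adj x y := G.Adj x y ∧ x ∉ A ∧ y ∉ A
  symm := ⟨fun _ _ ⟨h, hx, hy⟩ => ⟨h.symm, hy, hx⟩⟩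
  loopless := ⟨fun x ⟨h, _, _⟩ => G.loopless.irrefl x h⟩

/-- `dist_{(G,S)}(u,v)`: the distance between `u` and `v` in `G - (S \ {u,v})`,
with value `⊤` if there is no path between `u` and `v` in that graph. -/
noncomputable def distDel {V : Type*} (G : SimpleGraph V) (S : Set V) (u v : V) : ℕ∞ :=
  (G.deleteSet (S \ {u, v})).edist u v

/-- `w_{(G,S)}(u) = Σ_{v ∈ S} (1/2)^{dist_{(G,S)}(u,v) - 1}`, a sum with values in `[0,∞]`
in which a summand with infinite distance equals `0`. -/
noncomputable def expWSet {V : Type*} (G : SimpleGraph V) (S : Set V) (u : V) : ℝ≥0∞ :=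
  ∑' v : S, if distDel G S u (v : V) = ⊤ then 0
    else 2 * (2⁻¹ : ℝ≥0∞) ^ (distDel G S u (v : V)).toNat

/-- `S` is exponentially independent in `G`: `w_{(G,S∖{u})}(u) < 1` for every `u ∈ S`. -/
def ExpIndepSet {V : Type*} (G : SimpleGraph V) (S : Set V) : Prop :=
  ∀ u ∈ S, expWSet G (S \ {u}) u < 1

/-- `G` is an infinite cubic tree: a connected acyclic graph on a countably infinite
vertex set in which every vertex has degree `3`. -/
def IsInfCubicTree {V : Type*} (G : SimpleGraph V) : Prop :=
  Countable V ∧ Infinite V ∧ G.Connected ∧ G.IsAcyclic ∧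
    ∀ v : V, (G.neighborSet v).encard = 3

/-- `f(u,S) = limsup_{k→∞} |S ∩ B^k(u)| / |B^k(u)|`, where `B^k(u)` is the ball of
radius `k` around `u`, of cardinality `3·2^k - 2` in the infinite cubic tree. -/
noncomputable def ballDensity {V : Type*} (G : SimpleGraph V) (S : Set V) (u : V) : ℝ :=
  Filter.limsup (fun k : ℕ =>
    ((S ∩ {v : V | G.edist u v ≤ (k : ℕ∞)}).ncard : ℝ) / (3 * 2 ^ k - 2)) Filter.atTop

namespace ExpIndepProofAux

variable {V : Type*} {G : SimpleGraph V}

lemma exists_deleteSet_walk {A : Set V} {a b : V} (w : G.Walk a b) :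
    (∀ x ∈ w.support, x ∉ A) → ∃ w' : (G.deleteSet A).Walk a b, w'.length = w.length := by
  induction w with
  | nil => exact fun _ => ⟨SimpleGraph.Walk.nil, rfl⟩
  | @cons a c b hadj p ih =>
    intro h
    obtain ⟨w', hw'⟩ := ih fun x hx => h x (by simp [SimpleGraph.Walk.support_cons, hx])
    have hc : c ∈ (SimpleGraph.Walk.cons hadj p).support := by
      rw [SimpleGraph.Walk.support_cons]
      exact List.mem_cons_of_mem _ p.start_mem_support
    exact ⟨SimpleGraph.Walk.cons (show (G.deleteSet A).Adj a c from ⟨hadj, h a (SimpleGraph.Walk.start_mem_support _), h c hc⟩) w',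
      by simp [hw']⟩

lemma ball_finite (hdeg : ∀ v : V, (G.neighborSet v).Finite) (u : V) :
    ∀ k : ℕ, {v : V | G.edist u v ≤ (k : ℕ∞)}.Finite
  | 0 => by
    apply Set.Finite.subset (Set.finite_singleton u)
    intro v hv
    simp only [Set.mem_setOf_eq, Nat.cast_zero, nonpos_iff_eq_zero] at hv
    simp [(SimpleGraph.edist_eq_zero_iff.mp hv).symm]
  | (k+1) => by
    have ih := ball_finite hdeg u k
    apply Set.Finite.subset (ih.union (Set.Finite.biUnion ih fun p _ => hdeg p))
    intro v hv
    simp only [Set.mem_setOf_eq] at hv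
    by_cases hk : G.edist u v ≤ (k : ℕ∞)
    · exact Or.inl hk
    · have hne : G.edist u v ≠ ⊤ := fun ht => by
        rw [ht, top_le_iff] at hv
        have : ((k+1:ℕ):ℕ∞) = ⊤ := by push_cast; exact hv
        exact ENat.coe_ne_top _ this
      obtain ⟨w, hw⟩ := SimpleGraph.exists_walk_of_edist_ne_top hne
      have hlen : w.reverse.length = w.length := SimpleGraph.Walk.length_reverse w
      cases hrev : w.reverse with
      | nil =>
        exfalso
        apply hk
        rw [hrev] at hlen
        simp only [SimpleGraph.Walk.length_nil] at hlen
        rw [← hw, ← hlen]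
        simp
      | @cons _ c _ hadj q =>
        right
        rw [hrev] at hlen
        simp only [SimpleGraph.Walk.length_cons] at hlen
        have hnat : w.length ≤ k + 1 := by
          rw [← hw] at hv
          exact_mod_cast hv
        have hq : q.length ≤ k := by omega
        have hc : G.edist u c ≤ (k : ℕ∞) := by
          have h1 : G.edist u c ≤ (q.reverse.length : ℕ∞) := SimpleGraph.edist_le q.reverse
          rw [SimpleGraph.Walk.length_reverse] at h1
          exact le_trans h1 (by exact_mod_cast hq)
        exact Set.mem_biUnion hc hadj.symm

lemma edist_coe_dist {a b : V} (h : G.Reachable a b) :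
    G.edist a b = (G.dist a b : ℕ∞) := by
  rw [SimpleGraph.dist]
  exact (ENat.coe_toNat (SimpleGraph.edist_ne_top_iff_reachable.mpr h)).symm

lemma dist_triangle' {a b c : V} (h1 : G.Reachable a b) (h2 : G.Reachable b c) :
    G.dist a c ≤ G.dist a b + G.dist b c := by
  obtain ⟨p, hp⟩ := h1.exists_walk_length_eq_dist
  obtain ⟨q, hq⟩ := h2.exists_walk_length_eq_dist
  calc G.dist a c ≤ (p.append q).length := SimpleGraph.dist_le _
  _ = _ := by rw [SimpleGraph.Walk.length_append, hp, hq]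

lemma parent_exists (S : Set V) :
    ∀ n : ℕ, ∀ u s : V, u ∈ S → s ∈ S → s ≠ u → G.Reachable u s → G.dist u s = n →
    ∃ v, v ∈ S ∧ v ≠ s ∧ G.Reachable v s ∧ G.dist u v + G.dist v s = G.dist u s ∧
      ∃ w : G.Walk v s, w.length = G.dist v s ∧ ∀ x ∈ w.support, x ∉ S \ ({v, s} : Set V) := by
  intro n
  induction n using Nat.strong_induction_on with
  | _ n IH =>
  intro u s huS hsS hsu hreach hdist
  obtain ⟨W, hW⟩ := hreach.exists_walk_length_eq_dist
  by_cases hint : ∀ x ∈ W.support, x ∉ S \ ({u, s} : Set V)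
  · exact ⟨u, huS, Ne.symm hsu, hreach, by rw [SimpleGraph.dist_self, Nat.zero_add],
      ⟨W, hW, hint⟩⟩
  · push_neg at hint
    obtain ⟨t, htW, htS'⟩ := hint
    have htS : t ∈ S := htS'.1
    have htu : t ≠ u := fun h => htS'.2 (by simp [h])
    have hts : t ≠ s := fun h => htS'.2 (by simp [h])
    set W1 := W.takeUntil t htW with hW1
    set W2 := W.dropUntil t htW with hW2
    have hlen : W1.length + W2.length = W.length := by
      rw [← SimpleGraph.Walk.length_append, SimpleGraph.Walk.take_spec]
    have h1 : G.dist u t ≤ W1.length := SimpleGraph.dist_le _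
    have h2 : G.dist t s ≤ W2.length := SimpleGraph.dist_le _
    have htri : G.dist u s ≤ G.dist u t + G.dist t s := dist_triangle' ⟨W1⟩ ⟨W2⟩
    have hd1 : G.dist u t = W1.length := by omega
    have hd2 : G.dist t s = W2.length := by omega
    have hW1pos : 0 < W1.length := by
      rcases Nat.eq_zero_or_pos W1.length with h0 | h
      · exact absurd (SimpleGraph.Walk.eq_of_length_eq_zero h0) htu.symm
      · exact h
    have hlt : G.dist t s < n := by omega
    obtain ⟨v, hvS, hvs, hvr, hsum, ww⟩ :=
      IH (G.dist t s) (by omega) t s htS hsS (Ne.symm hts) ⟨W2⟩ rfl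
    refine ⟨v, hvS, hvs, hvr, ?_, ww⟩
    have htv' : G.Reachable t v := Reachable.trans ⟨W2⟩ hvr.symm
    have ht1 : G.dist u v ≤ G.dist u t + G.dist t v := dist_triangle' ⟨W1⟩ htv'
    have ht2 : G.dist u s ≤ G.dist u v + G.dist v s :=
      dist_triangle' (hreach.trans hvr.symm) hvr
    omega

lemma parent_full (S : Set V) {u s : V} (hu : u ∈ S) (hs : s ∈ S) (hsu : s ≠ u)
    (hr : G.Reachable u s) :
    ∃ v, v ∈ S ∧ v ≠ s ∧ G.Reachable u v ∧ G.Reachable v s ∧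
      G.dist u v + G.dist v s = G.dist u s ∧
      distDel G (S \ {v}) v s ≤ (G.dist v s : ℕ∞) := by
  obtain ⟨v, hvS, hvs, hvr, hsum, w, hwlen, hwsupp⟩ :=
    parent_exists S (G.dist u s) u s hu hs hsu hr rfl
  refine ⟨v, hvS, hvs, hr.trans hvr.symm, hvr, hsum, ?_⟩
  have hsub : ∀ x ∈ w.support, x ∉ (S \ {v}) \ ({v, s} : Set V) := by
    intro x hx hmem
    exact hwsupp x hx ⟨hmem.1.1, hmem.2⟩
  obtain ⟨w', hw'⟩ := exists_deleteSet_walk w hsub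
  calc distDel G (S \ {v}) v s ≤ (w'.length : ℕ∞) := SimpleGraph.edist_le w'
  _ = _ := by rw [hw', hwlen]


lemma fiber_bound {S : Set V} {v : V} (hw : expWSet G (S \ {v}) v < 1)
    (F : Finset V)
    (hF : ∀ s ∈ F, s ∈ S ∧ s ≠ v ∧ distDel G (S \ {v}) v s ≤ (G.dist v s : ℕ∞)) :
    ∑ s ∈ F, (2⁻¹ : ℝ≥0∞) ^ (G.dist v s) ≤ 2⁻¹ := by
  classical
  set T : Set V := S \ {v} with hT
  have hmemT : ∀ s ∈ F, s ∈ T := fun s hs => ⟨(hF s hs).1, (hF s hs).2.1⟩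
  set g : T → ℝ≥0∞ := fun x => if distDel G T v (x : V) = ⊤ then 0
    else 2 * (2⁻¹ : ℝ≥0∞) ^ (distDel G T v (x : V)).toNat with hg
  have key : ∑ s ∈ F, 2 * (2⁻¹ : ℝ≥0∞) ^ (G.dist v s) ≤ expWSet G T v := by
    set e : {x // x ∈ F} ↪ T := ⟨fun x => ⟨x.1, hmemT x.1 x.2⟩,
      fun a b hab => Subtype.ext (by simpa using congrArg Subtype.val hab)⟩ with he
    calc ∑ s ∈ F, 2 * (2⁻¹ : ℝ≥0∞) ^ (G.dist v s)
        = ∑ x ∈ F.attach, 2 * (2⁻¹ : ℝ≥0∞) ^ (G.dist v x.1) := (Finset.sum_attach _ _).symm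
      _ ≤ ∑ x ∈ F.attach, g (e x) := by
          apply Finset.sum_le_sum
          intro x _
          have hD : distDel G T v x.1 ≤ (G.dist v x.1 : ℕ∞) := (hF x.1 x.2).2.2
          have hDne : distDel G T v x.1 ≠ ⊤ :=
            fun hc => by rw [hc, top_le_iff] at hD; exact ENat.coe_ne_top _ hD
          have hge : g (e x) = 2 * (2⁻¹ : ℝ≥0∞) ^ (distDel G T v x.1).toNat := by
            show (if distDel G T v (x : V) = ⊤ then 0
              else 2 * (2⁻¹ : ℝ≥0∞) ^ (distDel G T v (x : V)).toNat) = _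
            rw [if_neg hDne]
          rw [hge]
          apply mul_le_mul_right
          apply pow_le_pow_of_le_one (zero_le) (ENNReal.inv_le_one.mpr one_le_two)
          have := ENat.toNat_le_toNat hD (ENat.coe_ne_top _)
          simpa using this
      _ = ∑ y ∈ F.attach.map e, g y := (Finset.sum_map _ _ _).symm
      _ ≤ ∑' y, g y := ENNReal.sum_le_tsum _
      _ = expWSet G T v := rfl
  have h2 : 2 * ∑ s ∈ F, (2⁻¹ : ℝ≥0∞) ^ (G.dist v s) ≤ 1 := by
    rw [Finset.mul_sum]
    exact key.trans hw.le
  calc ∑ s ∈ F, (2⁻¹ : ℝ≥0∞) ^ (G.dist v s)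
      = 2⁻¹ * (2 * ∑ s ∈ F, (2⁻¹ : ℝ≥0∞) ^ (G.dist v s)) := by
        rw [← mul_assoc, ENNReal.inv_mul_cancel two_ne_zero ENNReal.ofNat_ne_top, one_mul]
    _ ≤ 2⁻¹ * 1 := mul_le_mul_right h2 _
    _ = 2⁻¹ := mul_one _

lemma core (S : Set V) (hS : ExpIndepSet G S) (u : V) (hu : u ∈ S) (n : ℕ)
    (F : Finset V) (hFmem : ∀ s, s ∈ F ↔ s ∈ S ∧ G.edist u s ≤ (n : ℕ∞)) :
    ∑ s ∈ F, (2⁻¹ : ℝ≥0∞) ^ (G.dist u s) ≤ 2 := by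
  classical
  have huF : u ∈ F := (hFmem u).2 ⟨hu, by simp [SimpleGraph.edist_self]⟩
  set A := F.erase u with hA
  have hreachA : ∀ s ∈ A, G.Reachable u s := by
    intro s hsA
    have hsF := Finset.mem_of_mem_erase hsA
    have := ((hFmem s).1 hsF).2
    refine SimpleGraph.reachable_of_edist_ne_top fun hT => ?_
    rw [hT, top_le_iff] at this
    exact ENat.coe_ne_top _ this
  have hex : ∀ s ∈ A, ∃ v, v ∈ S ∧ v ≠ s ∧ G.Reachable u v ∧ G.Reachable v s ∧
      G.dist u v + G.dist v s = G.dist u s ∧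
      distDel G (S \ {v}) v s ≤ (G.dist v s : ℕ∞) := by
    intro s hsA
    have hsF := Finset.mem_of_mem_erase hsA
    exact parent_full S hu ((hFmem s).1 hsF).1 (Finset.ne_of_mem_erase hsA)
      (hreachA s hsA)
  set p : V → V := fun s => if h : ∃ v, v ∈ S ∧ v ≠ s ∧ G.Reachable u v ∧ G.Reachable v s ∧
      G.dist u v + G.dist v s = G.dist u s ∧
      distDel G (S \ {v}) v s ≤ (G.dist v s : ℕ∞) then h.choose else u with hp
  have hpspec : ∀ s ∈ A, p s ∈ S ∧ p s ≠ s ∧ G.Reachable u (p s) ∧ G.Reachable (p s) s ∧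
      G.dist u (p s) + G.dist (p s) s = G.dist u s ∧
      distDel G (S \ {p s}) (p s) s ≤ (G.dist (p s) s : ℕ∞) := by
    intro s hsA
    have h := hex s hsA
    have hps : p s = h.choose := by rw [hp]; exact dif_pos h
    rw [hps]
    exact h.choose_spec
  have hmaps : ∀ s ∈ A, p s ∈ F := by
    intro s hsA
    obtain ⟨h1, _, h3, _, h5, _⟩ := hpspec s hsA
    refine (hFmem _).2 ⟨h1, ?_⟩
    have hsF := Finset.mem_of_mem_erase hsA
    have hes : G.edist u s ≤ (n : ℕ∞) := ((hFmem s).1 hsF).2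
    have heq : G.edist u (p s) = (G.dist u (p s) : ℕ∞) := edist_coe_dist h3
    have heqs : G.edist u s = (G.dist u s : ℕ∞) := edist_coe_dist (hreachA s hsA)
    rw [heq]
    rw [heqs] at hes
    have hds : G.dist u s ≤ n := by exact_mod_cast hes
    have : G.dist u (p s) ≤ G.dist u s := by omega
    exact_mod_cast le_trans (Nat.cast_le.mpr this) (by exact_mod_cast hds)
  set g : V → ℝ≥0∞ := fun s => (2⁻¹ : ℝ≥0∞) ^ (G.dist u s) with hg
  have hsplit : ∑ v ∈ F, ∑ s ∈ A.filter (fun s => p s = v), g s = ∑ s ∈ A, g s :=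
    Finset.sum_fiberwise_of_maps_to hmaps g
  have hinner : ∀ v ∈ F, ∑ s ∈ A.filter (fun s => p s = v), g s ≤ g v * 2⁻¹ := by
    intro v _
    rcases Finset.eq_empty_or_nonempty (A.filter (fun s => p s = v)) with he | ⟨s₀, hs₀⟩
    · simp [he]
    · have hs₀A : s₀ ∈ A := (Finset.mem_filter.mp hs₀).1
      have hps₀ : p s₀ = v := (Finset.mem_filter.mp hs₀).2
      have hvS : v ∈ S := hps₀ ▸ (hpspec s₀ hs₀A).1
      have hwv : expWSet G (S \ {v}) v < 1 := hS v hvS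
      have hterm : ∀ s ∈ A.filter (fun s => p s = v),
          g s = g v * (2⁻¹ : ℝ≥0∞) ^ (G.dist v s) := by
        intro s hs
        obtain ⟨hsA, hpsv⟩ := Finset.mem_filter.mp hs
        obtain ⟨_, _, _, _, h5, _⟩ := hpspec s hsA
        rw [hpsv] at h5
        rw [hg]
        simp only
        rw [← h5, pow_add]
      have hhyp : ∀ s ∈ A.filter (fun s => p s = v),
          s ∈ S ∧ s ≠ v ∧ distDel G (S \ {v}) v s ≤ (G.dist v s : ℕ∞) := by
        intro s hs
        obtain ⟨hsA, hpsv⟩ := Finset.mem_filter.mp hs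
        obtain ⟨_, h2, _, _, _, h6⟩ := hpspec s hsA
        rw [hpsv] at h2 h6
        exact ⟨((hFmem s).1 (Finset.mem_of_mem_erase hsA)).1, fun hsv => h2 (hsv ▸ rfl), h6⟩
      calc ∑ s ∈ A.filter (fun s => p s = v), g s
          = ∑ s ∈ A.filter (fun s => p s = v), g v * (2⁻¹ : ℝ≥0∞) ^ (G.dist v s) :=
            Finset.sum_congr rfl hterm
        _ = g v * ∑ s ∈ A.filter (fun s => p s = v), (2⁻¹ : ℝ≥0∞) ^ (G.dist v s) :=
            (Finset.mul_sum _ _ _).symm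
        _ ≤ g v * 2⁻¹ := mul_le_mul_right (fiber_bound hwv _ hhyp) _
  have hXle : ∑ s ∈ A, g s ≤ 2⁻¹ * ∑ v ∈ F, g v := by
    rw [← hsplit]
    calc ∑ v ∈ F, ∑ s ∈ A.filter (fun s => p s = v), g s
        ≤ ∑ v ∈ F, g v * 2⁻¹ := Finset.sum_le_sum hinner
      _ = 2⁻¹ * ∑ v ∈ F, g v := by rw [← Finset.sum_mul, mul_comm]
  have hFA : ∑ v ∈ F, g v = g u + ∑ s ∈ A, g s := (Finset.add_sum_erase F g huF).symm
  have hgu : g u = 1 := by rw [hg]; simp [SimpleGraph.dist_self]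
  set X := ∑ s ∈ A, g s with hX
  have hXne : X ≠ ⊤ := by
    rw [hX]
    refine (ENNReal.sum_lt_top.mpr fun s _ => ?_).ne
    exact ENNReal.pow_lt_top (lt_of_le_of_lt (ENNReal.inv_le_one.mpr one_le_two)
      ENNReal.one_lt_top)
  have h1 : X ≤ 2⁻¹ + 2⁻¹ * X := by
    rw [hFA, hgu, mul_add, mul_one] at hXle
    exact hXle
  have hX1 : X ≤ 1 := by
    have hhalf : (2⁻¹ : ℝ≥0∞) + 2⁻¹ = 1 := ENNReal.inv_two_add_inv_two
    have h2 : X + X ≤ 1 + X := by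
      calc X + X ≤ (2⁻¹ + 2⁻¹ * X) + (2⁻¹ + 2⁻¹ * X) := add_le_add h1 h1
        _ = (2⁻¹ + 2⁻¹) + (2⁻¹ * X + 2⁻¹ * X) := by ring
        _ = 1 + X := by rw [hhalf, ← add_mul, hhalf, one_mul]
    exact (ENNReal.add_le_add_iff_right hXne).mp h2
  calc ∑ s ∈ F, g s = 1 + X := by rw [hFA, hgu]
    _ ≤ 1 + 1 := add_le_add_right hX1 _
    _ = 2 := one_add_one_eq_two

end ExpIndepProofAux

/-- If `S` is a set of vertices of the infinite cubic tree and `f(u*,S) > 0` for some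
vertex `u*`, then `S` is not an exponentially independent set. -/
theorem stmt3 {V : Type*} (G : SimpleGraph V) (hG : IsInfCubicTree G)
    (S : Set V) (ustar : V) (h : 0 < ballDensity G S ustar) :
    ¬ ExpIndepSet G S := by
  intro hS
  have hdeg3 : ∀ v : V, (G.neighborSet v).encard = 3 := hG.2.2.2.2
  classical
  set f : ℕ → ℝ := fun k =>
    ((S ∩ {v : V | G.edist ustar v ≤ (k : ℕ∞)}).ncard : ℝ) / (3 * 2 ^ k - 2) with hf
  have hlim : Filter.Tendsto f Filter.atTop (nhds 0) := by
    by_cases hex : ∃ s0, s0 ∈ S ∧ G.Reachable ustar s0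
    · obtain ⟨s0, hs0S, hs0r⟩ := hex
      have hdeg : ∀ v : V, (G.neighborSet v).Finite := fun v =>
        Set.finite_of_encard_eq_coe (show (G.neighborSet v).encard = ((3:ℕ):ℕ∞) by exact_mod_cast hdeg3 v)
      set d0 := G.dist ustar s0 with hd0
      have hSB : ∀ m : ℕ, (S ∩ {v | G.edist s0 v ≤ (m : ℕ∞)}).Finite := fun m =>
        (ExpIndepProofAux.ball_finite hdeg s0 m).inter_of_right S
      set Fm : ℕ → Finset V := fun m => (hSB m).toFinset with hFm
      have hFmem : ∀ m s, s ∈ Fm m ↔ s ∈ S ∧ G.edist s0 s ≤ (m : ℕ∞) := by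
        intro m s
        rw [hFm]
        simp [Set.Finite.mem_toFinset]
      have hcoreE : ∀ m, ∑ s ∈ Fm m, (2⁻¹ : ℝ≥0∞) ^ (G.dist s0 s) ≤ 2 := fun m =>
        ExpIndepProofAux.core S hS s0 hs0S m (Fm m) (hFmem m)
      set P : ℕ → ℝ := fun m => ∑ s ∈ Fm m, (2⁻¹ : ℝ) ^ (G.dist s0 s) with hP
      have hPle : ∀ m, P m ≤ 2 := by
        intro m
        have h1 : ((∑ s ∈ Fm m, (2⁻¹ : ℝ≥0∞) ^ (G.dist s0 s)).toReal ≤ (2 : ℝ≥0∞).toReal) :=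
          ENNReal.toReal_mono (by simp) (hcoreE m)
        rw [ENNReal.toReal_sum (fun s _ => by
          exact (ENNReal.pow_lt_top (lt_of_le_of_lt (ENNReal.inv_le_one.mpr one_le_two)
            ENNReal.one_lt_top)).ne)] at h1
        have h2 : ∑ s ∈ Fm m, ((2 : ℝ) ^ (G.dist s0 s))⁻¹ ≤ 2 := by
          simpa [ENNReal.toReal_pow, ENNReal.toReal_inv, inv_pow] using h1
        rw [hP]
        show ∑ s ∈ Fm m, (2⁻¹ : ℝ) ^ (G.dist s0 s) ≤ 2
        simp only [inv_pow]
        exact h2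
      have hsubFm : ∀ {m m' : ℕ}, m ≤ m' → Fm m ⊆ Fm m' := by
        intro m m' hmm s hs
        rw [hFmem] at hs ⊢
        exact ⟨hs.1, le_trans hs.2 (by exact_mod_cast hmm)⟩
      have hbdd : BddAbove (Set.range P) := ⟨2, by rintro x ⟨m, rfl⟩; exact hPle m⟩
      set L := ⨆ m, P m with hL
      have hPleL : ∀ m, P m ≤ L := fun m => le_ciSup hbdd m
      rw [Metric.tendsto_atTop]
      intro ε hε
      set ε' := ε / (2 ^ (d0 + 1) * 2) with hε'
      have hε'pos : 0 < ε' := by positivity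
      obtain ⟨J, hJ⟩ : ∃ J, L - ε' < P J := by
        obtain ⟨J, hJ⟩ := exists_lt_of_lt_ciSup (sub_lt_self L hε'pos)
        exact ⟨J, hJ⟩
      have htail : ∀ m, J ≤ m → ((Fm m \ Fm J).card : ℝ) * (2⁻¹) ^ m ≤ ε' := by
        intro m hJm
        have hsub : Fm J ⊆ Fm m := hsubFm hJm
        have hsplitP : ∑ s ∈ Fm m \ Fm J, (2⁻¹ : ℝ) ^ (G.dist s0 s) + P J = P m := by
          rw [hP]
          exact Finset.sum_sdiff hsub
        have hterm : ∀ s ∈ Fm m \ Fm J, (2⁻¹ : ℝ) ^ m ≤ (2⁻¹ : ℝ) ^ (G.dist s0 s) := by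
          intro s hs
          have hsm : s ∈ Fm m := (Finset.mem_sdiff.mp hs).1
          have hdm : G.dist s0 s ≤ m := by
            have he := ((hFmem m s).1 hsm).2
            have := ENat.toNat_le_toNat he (ENat.coe_ne_top m)
            simpa [SimpleGraph.dist] using this
          exact pow_le_pow_of_le_one (by norm_num) (by norm_num) hdm
        have hcard : ((Fm m \ Fm J).card : ℝ) * (2⁻¹) ^ m ≤
            ∑ s ∈ Fm m \ Fm J, (2⁻¹ : ℝ) ^ (G.dist s0 s) := by
          have := Finset.card_nsmul_le_sum (Fm m \ Fm J)
            (fun s => (2⁻¹ : ℝ) ^ (G.dist s0 s)) ((2⁻¹ : ℝ) ^ m) hterm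
          simpa [nsmul_eq_mul] using this
        have := hPleL m
        linarith [hJ]
      set C := ((Fm J).card : ℝ) with hC
      obtain ⟨K1, hK1⟩ : ∃ K1 : ℕ, C < ε / 2 * 2 ^ K1 := by
        obtain ⟨K1, hK1⟩ := pow_unbounded_of_one_lt (C / (ε / 2)) (by norm_num : (1 : ℝ) < 2)
        refine ⟨K1, ?_⟩
        rw [div_lt_iff₀ (by positivity)] at hK1
        linarith
      refine ⟨max J K1, fun k hk => ?_⟩
      have hkJ : J ≤ k := le_trans (le_max_left _ _) hk
      have hkK1 : K1 ≤ k := le_trans (le_max_right _ _) hk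
      set m := k + d0 with hm
      have hmJ : J ≤ m := le_trans hkJ (Nat.le_add_right _ _)
      have hsubset : S ∩ {v | G.edist ustar v ≤ (k : ℕ∞)} ⊆ (Fm m : Set V) := by
        intro v hv
        obtain ⟨hvS, hve⟩ := hv
        have : G.edist s0 v ≤ (m : ℕ∞) := by
          calc G.edist s0 v ≤ G.edist s0 ustar + G.edist ustar v := SimpleGraph.edist_triangle
            _ ≤ (d0 : ℕ∞) + (k : ℕ∞) := by
                refine add_le_add (le_of_eq ?_) hve
                rw [ExpIndepProofAux.edist_coe_dist hs0r.symm, SimpleGraph.dist_comm]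
            _ = (m : ℕ∞) := by rw [hm]; push_cast; ring
        have : v ∈ Fm m := (hFmem m v).2 ⟨hvS, this⟩
        exact_mod_cast this
      have hncard : ((S ∩ {v | G.edist ustar v ≤ (k : ℕ∞)}).ncard : ℝ) ≤ ((Fm m).card : ℝ) := by
        have h1 : (S ∩ {v | G.edist ustar v ≤ (k : ℕ∞)}).ncard ≤ ((Fm m : Set V)).ncard :=
          Set.ncard_le_ncard hsubset (Fm m).finite_toSet
        rw [Set.ncard_coe_finset] at h1
        exact_mod_cast h1
      have hcardm : ((Fm m).card : ℝ) ≤ C + ε' * 2 ^ m := by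
        have h1 : (Fm m).card ≤ (Fm m \ Fm J).card + (Fm J).card := by
          rw [Finset.card_sdiff_add_card]
          exact Finset.card_le_card Finset.subset_union_left
        have h2 : ((Fm m \ Fm J).card : ℝ) ≤ ε' * 2 ^ m := by
          have h3 := htail m hmJ
          have h5 : ((Fm m \ Fm J).card : ℝ)
              = ((Fm m \ Fm J).card : ℝ) * (2⁻¹) ^ m * 2 ^ m := by
            rw [mul_assoc, ← mul_pow]
            norm_num
          rw [h5]
          exact mul_le_mul_of_nonneg_right h3 (by positivity)
        have h6 : ((Fm m).card : ℝ) ≤ ((Fm m \ Fm J).card : ℝ) + C := by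
          rw [hC]
          exact_mod_cast h1
        linarith
      have hone : (1 : ℝ) ≤ 2 ^ k := one_le_pow₀ (by norm_num)
      have hden : (2 : ℝ) ^ k ≤ 3 * 2 ^ k - 2 := by nlinarith
      have hfk0 : 0 ≤ f k := by
        rw [hf]
        exact div_nonneg (by positivity) (by nlinarith)
      have hfk : f k ≤ (C + ε' * 2 ^ m) / 2 ^ k := by
        rw [hf]
        refine div_le_div₀ ?_ (le_trans hncard hcardm) (by positivity) hden
        have hC0 : (0 : ℝ) ≤ C := hC ▸ Nat.cast_nonneg _
        nlinarith [hε'pos, pow_pos (by norm_num : (0:ℝ) < 2) m]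
      have hsplit2 : (C + ε' * 2 ^ m) / 2 ^ k = C / 2 ^ k + ε' * 2 ^ d0 := by
        rw [hm, pow_add]
        have h2k : (2 : ℝ) ^ k ≠ 0 := by positivity
        field_simp
      have hC2 : C / 2 ^ k < ε / 2 := by
        rw [div_lt_iff₀ (by positivity)]
        calc C < ε / 2 * 2 ^ K1 := hK1
          _ ≤ ε / 2 * 2 ^ k := by
              exact mul_le_mul_of_nonneg_left (pow_le_pow_right₀ (by norm_num) hkK1)
                (by positivity)
      have hep : ε' * 2 ^ d0 ≤ ε / 2 := by
        rw [hε', pow_succ]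
        have h2d : (0 : ℝ) < 2 ^ d0 := by positivity
        rw [div_mul_eq_mul_div, div_le_div_iff₀ (by positivity) (by norm_num)]
        nlinarith [hε.le]
      rw [Real.dist_eq, sub_zero, abs_of_nonneg hfk0]
      calc f k ≤ C / 2 ^ k + ε' * 2 ^ d0 := by rw [← hsplit2]; exact hfk
        _ < ε / 2 + ε / 2 := add_lt_add_of_lt_of_le hC2 hep
        _ = ε := by ring
    · have hempty : ∀ k : ℕ, S ∩ {v | G.edist ustar v ≤ (k : ℕ∞)} = ∅ := by
        intro k
        ext v
        simp only [Set.mem_inter_iff, Set.mem_setOf_eq, Set.mem_empty_iff_false, iff_false,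
          not_and]
        intro hvS hve
        refine hex ⟨v, hvS, SimpleGraph.reachable_of_edist_ne_top fun hT => ?_⟩
        rw [hT, top_le_iff] at hve
        exact ENat.coe_ne_top _ hve
      have : f = fun _ => 0 := funext fun k => by rw [hf]; simp [hempty k]
      rw [this]
      exact tendsto_const_nhds
  have hzero : ballDensity G S ustar = 0 := hlim.limsup_eq
  rw [hzero] at h
  exact lt_irrefl 0 h
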